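/- Let f, g ∈ K[[x_1,...,x_n]] with ord(f) = s ≥ 2, μ(f) < ∞ and s' = ord(j(f)). If M_k(f) ≅ M_k(g) as K[[t]]-algebras for some k ≥ 2μ(f) − s − s' + 3, then f is right equivalent to g. (Assuming the theorem that the isomorphism M_k(f) ≅ M_k(g) together with m^{⌊(k+s+s'+1)/2⌋} ⊆ m^2 j(f) implies right equivalence.) -/

import Mathlib

set_option maxHeartbeats 1000000
set_option synthInstance.maxHeartbeats 200000



noncomputable section

/-- The formal power series ring `K[[x_1,...,x_n]]`. -/
abbrev PS (K : Type*) [Field K] (n : ℕ) := MvPowerSeries (Fin n) K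

/-- The maximal ideal `m` of `K[[x]]` (power series with zero constant term). -/
def mx (K : Type*) [Field K] (n : ℕ) : Ideal (PS K n) :=
  RingHom.ker (MvPowerSeries.constantCoeff : PS K n →+* K)

/-- The `i`-th formal partial derivative of a power series. -/
def pd {K : Type*} [Field K] {n : ℕ} (i : Fin n) (f : PS K n) : PS K n :=
  fun e => (e i + 1 : ℕ) • MvPowerSeries.coeff (e + Finsupp.single i 1) f

/-- The Jacobian ideal `j(f) = ⟨∂f/∂x_1, ..., ∂f/∂x_n⟩`. -/
def jId {K : Type*} [Field K] {n : ℕ} (f : PS K n) : Ideal (PS K n) :=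
  Ideal.span (Set.range fun i => pd i f)

/-- The Tjurina ideal `tj(f) = ⟨f⟩ + j(f)`. -/
def tjId {K : Type*} [Field K] {n : ℕ} (f : PS K n) : Ideal (PS K n) :=
  Ideal.span {f} ⊔ jId f

/-- The ideal defining the `k`-th Tjurina algebra: `⟨f, m^k j(f)⟩`. -/
def TkId {K : Type*} [Field K] {n : ℕ} (k : ℕ) (f : PS K n) : Ideal (PS K n) :=
  Ideal.span {f} ⊔ (mx K n) ^ k * jId f

/-- The ideal defining the `k`-th Milnor algebra: `m^k j(f)`. -/
def MkId {K : Type*} [Field K] {n : ℕ} (k : ℕ) (f : PS K n) : Ideal (PS K n) :=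
  (mx K n) ^ k * jId f

/-- Contact equivalence: `g = u · φ(f)`. -/
def ContactEquiv {K : Type*} [Field K] {n : ℕ} (f g : PS K n) : Prop :=
  ∃ (φ : PS K n ≃ₐ[K] PS K n) (u : (PS K n)ˣ), g = (u : PS K n) * φ f

/-- Right equivalence: `g = φ(f)`. -/
def RightEquiv {K : Type*} [Field K] {n : ℕ} (f g : PS K n) : Prop :=
  ∃ φ : PS K n ≃ₐ[K] PS K n, g = φ f

/-- `f` is contact `N`-determined. -/
def ContactDetermined {K : Type*} [Field K] {n : ℕ} (N : ℕ) (f : PS K n) : Prop :=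
  ∀ g : PS K n, g - f ∈ (mx K n) ^ (N + 1) → ContactEquiv f g

/-- `f` is right `N`-determined. -/
def RightDetermined {K : Type*} [Field K] {n : ℕ} (N : ℕ) (f : PS K n) : Prop :=
  ∀ g : PS K n, g - f ∈ (mx K n) ^ (N + 1) → RightEquiv f g

lemma jac_pow_finrank_eq_bot {K Q : Type*} [Field K] [CommRing Q] [Algebra K Q]
    [FiniteDimensional K Q] (I : Ideal Q) (hjac : I ≤ Ideal.jacobson ⊥) :
    I ^ (Module.finrank K Q) = ⊥ := by
  have hNoeth : IsNoetherian Q Q := isNoetherian_of_tower K inferInstance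
  set μ := Module.finrank K Q with hμ
  have key : ∀ j : ℕ, I ^ j = ⊥ ∨
      Module.finrank K (Submodule.restrictScalars K (I ^ j)) + j ≤ μ := by
    intro j
    induction j with
    | zero =>
      right
      simpa using Submodule.finrank_le (Submodule.restrictScalars K (I ^ 0))
    | succ j ih =>
      rcases ih with h | h
      · left
        rw [pow_succ, h]; simp
      · by_cases heq : I ^ (j + 1) = I ^ j
        · left
          have hle : I ^ j ≤ I • (I ^ j) := by
            rw [smul_eq_mul, ← mul_comm (I ^ j) I, ← pow_succ, heq]
          have := Submodule.eq_bot_of_le_smul_of_le_jacobson_bot I (I ^ j)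
            (IsNoetherian.noetherian _) hle hjac
          rw [heq, this]
        · right
          have hle : I ^ (j + 1) ≤ I ^ j := Ideal.pow_le_pow_right (Nat.le_succ j)
          have hlt : Submodule.restrictScalars K (I ^ (j + 1)) <
              Submodule.restrictScalars K (I ^ j) := by
            refine lt_of_le_of_ne (fun x hx => hle hx) ?_
            intro hcontra
            exact heq (Submodule.restrictScalars_injective K _ _ hcontra)
          have := Submodule.finrank_lt_finrank_of_lt hlt
          omega
  rcases key μ with h | h
  · exact h
  · have h0 : Module.finrank K (Submodule.restrictScalars K (I ^ μ)) = 0 := by omega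
    have : Submodule.restrictScalars K (I ^ μ) = ⊥ :=
      Submodule.finrank_eq_zero.mp h0
    exact Submodule.restrictScalars_injective K _ _ (by simpa using this)

lemma mx_le_jacobson {K : Type*} [Field K] {n : ℕ} (J : Ideal (PS K n)) :
    mx K n ≤ J.jacobson := by
  rw [Ideal.jacobson]
  refine le_sInf ?_
  rintro M ⟨hJM, hM⟩
  rw [IsLocalRing.eq_maximalIdeal hM]
  intro x hx
  rw [IsLocalRing.mem_maximalIdeal]
  intro hu
  rw [MvPowerSeries.isUnit_iff_constantCoeff] at hu
  rw [mx, RingHom.mem_ker] at hx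
  rw [hx] at hu
  exact hu.ne_zero rfl

lemma mx_pow_finrank_le {K : Type*} [Field K] {n : ℕ} (J : Ideal (PS K n))
    (hJ : FiniteDimensional K (PS K n ⧸ J)) :
    (mx K n) ^ (Module.finrank K (PS K n ⧸ J)) ≤ J := by
  set mk := Ideal.Quotient.mk J
  have hjac : Ideal.map mk (mx K n) ≤ Ideal.jacobson ⊥ := by
    have h1 : Ideal.map mk (J.jacobson) = (Ideal.map mk J).jacobson :=
      Ideal.map_jacobson_of_surjective Ideal.Quotient.mk_surjective
        (le_of_eq Ideal.mk_ker)
    have h2 : Ideal.map mk J = ⊥ := Ideal.map_quotient_self J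
    calc Ideal.map mk (mx K n) ≤ Ideal.map mk (J.jacobson) :=
          Ideal.map_mono (mx_le_jacobson J)
      _ = Ideal.jacobson ⊥ := by rw [h1, h2]
  have hIμ : (Ideal.map mk (mx K n)) ^ (Module.finrank K (PS K n ⧸ J)) = ⊥ :=
    jac_pow_finrank_eq_bot _ hjac
  have : Ideal.map mk ((mx K n) ^ (Module.finrank K (PS K n ⧸ J))) = ⊥ := by
    rw [Ideal.map_pow]; exact hIμ
  rw [Ideal.map_eq_bot_iff_le_ker] at this
  rwa [Ideal.mk_ker] at this

/-- if `M_k(f) ≅ M_k(g)` as `K[[t]]`-algebras for some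
`k ≥ 2μ(f) − s − s' + 3` then `f` and `g` are right equivalent
(assuming Theorem `right`). -/
theorem stmt_11 {K : Type*} [Field K] [IsAlgClosed K] {n : ℕ} (f g : PS K n)
    (s s' k : ℕ) (hs : 2 ≤ s)
    (hf : f ∈ (mx K n) ^ s) (hf' : f ∉ (mx K n) ^ (s + 1))
    (hs' : jId f ≤ (mx K n) ^ s') (hs'' : ¬ jId f ≤ (mx K n) ^ (s' + 1))
    (hmu : FiniteDimensional K (PS K n ⧸ jId f))
    (hk : 2 * Module.finrank K (PS K n ⧸ jId f) + 3 ≤ k + s + s')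
    (hThm : ∀ k' : ℕ,
      (∃ e : (PS K n ⧸ MkId k' f) ≃ₐ[K] (PS K n ⧸ MkId k' g),
        e (Ideal.Quotient.mk (MkId k' f) f) = Ideal.Quotient.mk (MkId k' g) g) →
      (mx K n) ^ ((k' + s + s' + 1) / 2) ≤ (mx K n) ^ 2 * jId f →
      RightEquiv f g)
    (hiso : ∃ e : (PS K n ⧸ MkId k f) ≃ₐ[K] (PS K n ⧸ MkId k g),
      e (Ideal.Quotient.mk (MkId k f) f) = Ideal.Quotient.mk (MkId k g) g) :
    RightEquiv f g := by
  apply hThm k hiso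
  set μ := Module.finrank K (PS K n ⧸ jId f) with hμ
  have h1 : μ + 2 ≤ (k + s + s' + 1) / 2 := by
    rw [Nat.le_div_iff_mul_le (by norm_num)]
    omega
  calc (mx K n) ^ ((k + s + s' + 1) / 2) ≤ (mx K n) ^ (μ + 2) :=
        Ideal.pow_le_pow_right h1
    _ = (mx K n) ^ 2 * (mx K n) ^ μ := by rw [add_comm, pow_add]
    _ ≤ (mx K n) ^ 2 * jId f :=
        Ideal.mul_mono_right (mx_pow_finrank_le (jId f) hmu)
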